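/- Let L be a Leibniz q-algebra, where q = κ(p-1)+1. Then L^{⊗κ} is a Leibniz p-algebra with respect to the bracket [l_{11}⊗⋯⊗l_{1κ}, …, l_{p1}⊗⋯⊗l_{pκ}] = Σ_{i=1}^{κ} l_{11}⊗⋯⊗[l_{1i}, l_{21},…,l_{2κ},…,l_{p1},…,l_{pκ}]⊗⋯⊗l_{1κ}. -/

import Mathlib

open Function TensorProduct

section Prelude

variable {L : Type*}

/-- The nested (iterated) bracket: `nestBr b k` is the `k*(n-1)+1`-ary operation
`ω_p(a_1,…,a_p) = b(a_1,…,a_{n-1}, nestBr b (k-1) (a_n,…,a_p))`. -/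
def nestBr {n : ℕ} (b : (Fin n → L) → L) : (k : ℕ) → (Fin (k * (n - 1) + 1) → L) → L
  | 0, a => a ⟨0, Nat.succ_pos _⟩
  | k + 1, a =>
    b fun j : Fin n =>
      if h : (j : ℕ) < n - 1 then
        a ⟨(j : ℕ),
          Nat.lt_succ_of_lt (lt_of_lt_of_le h (Nat.le_mul_of_pos_left _ (Nat.succ_pos k)))⟩
      else
        nestBr b k fun i =>
          a ⟨(n - 1) + (i : ℕ), by
            have h1 : (k + 1) * (n - 1) + 1 = (n - 1) + (k * (n - 1) + 1) := by ring
            rw [h1]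
            exact Nat.add_lt_add_left i.isLt _⟩

/-- `f` is a derivation with respect to the `n`-linear operation `b`. -/
def IsNDeriv {n : ℕ} [AddCommMonoid L] (b : (Fin n → L) → L) (f : L → L) : Prop :=
  ∀ a : Fin n → L, f (b a) = ∑ i, b (Function.update a i (f (a i)))

/-- The fundamental identity of Leibniz `n`-algebras:
`[[x_1,…,x_n],y_2,…,y_n] = Σ_i [x_1,…,[x_i,y_2,…,y_n],…,x_n]`
(the entries `y 1, …, y (n-1)` play the role of `y_2,…,y_n`). -/
def FundId {n : ℕ} [NeZero n] [AddCommMonoid L] (b : (Fin n → L) → L) : Prop :=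
  ∀ x y : Fin n → L,
    b (Function.update y 0 (b x)) =
      ∑ i, b (Function.update x i (b (Function.update y 0 (x i))))

/-- The right-nested bracket `[x_1,[x_2,…,[x_m,x_{m+1}]…]]` built from a binary bracket. -/
def nested2 (b : L → L → L) : (m : ℕ) → (Fin (m + 1) → L) → L
  | 0, a => a 0
  | m + 1, a => b (a 0) (nested2 b m fun i => a i.succ)

end Prelude

namespace DTAux

variable {K L : Type*} [Field K] [AddCommGroup L] [Module K L] {κ : ℕ}

abbrev TP (K L : Type*) [Field K] [AddCommGroup L] [Module K L] (κ : ℕ) :=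
  ⨂[K] (_ : Fin κ), L

/-- auxiliary multilinear map for the derivation extension -/
noncomputable def delta0 (f : L →ₗ[K] L) : MultilinearMap K (fun _ : Fin κ => L) (TP K L κ) :=
  ∑ n : Fin κ, (PiTensorProduct.tprod K).compLinearMap (Function.update (fun _ => LinearMap.id) n f)

lemma delta0_apply (f : L →ₗ[K] L) (l : Fin κ → L) :
    delta0 f l = ∑ n : Fin κ, PiTensorProduct.tprod K (Function.update l n (f (l n))) := by
  rw [delta0, MultilinearMap.sum_apply]
  refine Finset.sum_congr rfl fun n _ => ?_
  simp only [MultilinearMap.compLinearMap_apply]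
  congr 1
  funext i
  rcases eq_or_ne i n with rfl | h
  · simp
  · simp [Function.update_of_ne h]

/-- The derivation extension of `f` to the tensor power. -/
noncomputable def delta (f : L →ₗ[K] L) : TP K L κ →ₗ[K] TP K L κ :=
  PiTensorProduct.lift (delta0 f)

lemma delta_tprod (f : L →ₗ[K] L) (μ : Fin κ → L) :
    delta f (PiTensorProduct.tprod K μ) =
      ∑ n : Fin κ, PiTensorProduct.tprod K (Function.update μ n (f (μ n))) := by
  rw [delta, PiTensorProduct.lift.tprod, delta0_apply]

lemma delta_add (f g : L →ₗ[K] L) :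
    delta (κ := κ) (f + g) = delta f + delta g := by
  refine PiTensorProduct.ext (MultilinearMap.ext fun μ => ?_)
  simp only [LinearMap.compMultilinearMap_apply, LinearMap.add_apply, delta_tprod,
    MultilinearMap.map_update_add, Finset.sum_add_distrib]

lemma delta_smul (c : K) (f : L →ₗ[K] L) :
    delta (κ := κ) (c • f) = c • delta f := by
  refine PiTensorProduct.ext (MultilinearMap.ext fun μ => ?_)
  simp only [LinearMap.compMultilinearMap_apply, LinearMap.smul_apply, delta_tprod,
    MultilinearMap.map_update_smul, Finset.smul_sum]

/-- `delta` as an additive monoid hom. -/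
noncomputable def deltaHom : (L →ₗ[K] L) →+ (TP K L κ →ₗ[K] TP K L κ) :=
  AddMonoidHom.mk' delta delta_add

lemma delta_sum {W : Type*} (s : Finset W) (h : W → (L →ₗ[K] L)) :
    delta (κ := κ) (∑ w ∈ s, h w) = ∑ w ∈ s, delta (h w) :=
  map_sum deltaHom h s

variable {m : ℕ}

/-- right multiplication operator of the bracket -/
noncomputable def Rfun (b : MultilinearMap K (fun _ : Fin (κ * m + 1) => L) L)
    (a : Fin (κ * m) → L) : L →ₗ[K] L where
  toFun z := b (Fin.cons z a)
  map_add' z z' := MultilinearMap.cons_add b a z z'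
  map_smul' c z := MultilinearMap.cons_smul b a c z

@[simp] lemma Rfun_apply (b : MultilinearMap K (fun _ : Fin (κ * m + 1) => L) L)
    (a : Fin (κ * m) → L) (z : L) : Rfun b a z = b (Fin.cons z a) := rfl

lemma Rfun_update_add (b : MultilinearMap K (fun _ : Fin (κ * m + 1) => L) L)
    (a : Fin (κ * m) → L) (w : Fin (κ * m)) (x y : L) :
    Rfun b (Function.update a w (x + y)) =
      Rfun b (Function.update a w x) + Rfun b (Function.update a w y) := by
  ext z
  simp only [Rfun_apply, LinearMap.add_apply, Fin.cons_update]
  exact b.map_update_add _ _ x y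

lemma Rfun_update_smul (b : MultilinearMap K (fun _ : Fin (κ * m + 1) => L) L)
    (a : Fin (κ * m) → L) (w : Fin (κ * m)) (c : K) (x : L) :
    Rfun b (Function.update a w (c • x)) = c • Rfun b (Function.update a w x) := by
  ext z
  simp only [Rfun_apply, LinearMap.smul_apply, Fin.cons_update]
  exact b.map_update_smul _ _ c x

/-- `a ↦ delta (Rfun b a)` as a multilinear map. -/
noncomputable def Emap (b : MultilinearMap K (fun _ : Fin (κ * m + 1) => L) L) :
    MultilinearMap K (fun _ : Fin (κ * m) => L) (TP K L κ →ₗ[K] TP K L κ) where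
  toFun a := delta (Rfun b a)
  map_update_add' := @fun dec a w x y => by
    rw [Subsingleton.elim dec (by clear dec; infer_instance)]
    rw [Rfun_update_add, delta_add]
  map_update_smul' := @fun dec a w c x => by
    rw [Subsingleton.elim dec (by clear dec; infer_instance)]
    rw [Rfun_update_smul, delta_smul]

@[simp] lemma Emap_apply (b : MultilinearMap K (fun _ : Fin (κ * m + 1) => L) L)
    (a : Fin (κ * m) → L) : Emap b a = delta (Rfun b a) := rfl


lemma fund_flip (b : MultilinearMap K (fun _ : Fin (κ * m + 1) => L) L)
    (hb : ∀ x y : Fin (κ * m + 1) → L,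
      b (Function.update y 0 (b x)) =
        ∑ i, b (Function.update x i (b (Function.update y 0 (x i)))))
    (a c : Fin (κ * m) → L) (z : L) :
    Rfun b c (Rfun b a z) = Rfun b a (Rfun b c z) +
      ∑ w : Fin (κ * m), Rfun b (Function.update a w (Rfun b c (a w))) z := by
  have h := hb (Fin.cons z a) (Fin.cons 0 c)
  rw [Fin.update_cons_zero, Fin.sum_univ_succ] at h
  simp only [Fin.cons_zero, Fin.cons_succ, Fin.update_cons_zero, ← Fin.cons_update] at h
  simp only [Rfun_apply]
  exact h

lemma delta_delta (f g h : L →ₗ[K] L) (hfg : ∀ z, g (f z) = f (g z) + h z) (μ : Fin κ → L) :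
    delta g (delta f (PiTensorProduct.tprod K μ)) =
      delta f (delta g (PiTensorProduct.tprod K μ)) + delta h (PiTensorProduct.tprod K μ) := by
  rw [delta_tprod f μ, delta_tprod g μ, delta_tprod h μ, map_sum, map_sum]
  simp only [delta_tprod]
  have expand : ∀ φ ψ : L →ₗ[K] L,
      (∑ n : Fin κ, ∑ t : Fin κ, PiTensorProduct.tprod K
          (Function.update (Function.update μ n (φ (μ n))) t
            (ψ (Function.update μ n (φ (μ n)) t)))) =
      (∑ n : Fin κ, PiTensorProduct.tprod K (Function.update μ n (ψ (φ (μ n))))) +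
      ∑ n : Fin κ, ∑ t ∈ Finset.univ.erase n, PiTensorProduct.tprod K
          (Function.update (Function.update μ n (φ (μ n))) t (ψ (μ t))) := by
    intro φ ψ
    rw [← Finset.sum_add_distrib]
    refine Finset.sum_congr rfl fun n _ => ?_
    rw [← Finset.add_sum_erase _ _ (Finset.mem_univ n)]
    congr 1
    · rw [Function.update_self, Function.update_idem]
    · refine Finset.sum_congr rfl fun t ht => ?_
      rw [Function.update_of_ne (Finset.ne_of_mem_erase ht)]
  rw [expand f g, expand g f]
  have cross : (∑ n : Fin κ, ∑ t ∈ Finset.univ.erase n, PiTensorProduct.tprod K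
        (Function.update (Function.update μ n (f (μ n))) t (g (μ t)))) =
      ∑ n : Fin κ, ∑ t ∈ Finset.univ.erase n, PiTensorProduct.tprod K
        (Function.update (Function.update μ n (g (μ n))) t (f (μ t))) := by
    rw [Finset.sum_comm' (t' := Finset.univ) (s' := fun t => Finset.univ.erase t)
      (fun x y => by simp [Finset.mem_erase, ne_comm, eq_comm])]
    refine Finset.sum_congr rfl fun n _ => Finset.sum_congr rfl fun t ht => ?_
    rw [Function.update_comm (Finset.ne_of_mem_erase ht)]
  rw [cross]
  have main : (∑ n : Fin κ, PiTensorProduct.tprod K (Function.update μ n (g (f (μ n))))) =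
      (∑ n : Fin κ, PiTensorProduct.tprod K (Function.update μ n (f (g (μ n))))) +
      ∑ n : Fin κ, PiTensorProduct.tprod K (Function.update μ n (h (μ n))) := by
    rw [← Finset.sum_add_distrib]
    refine Finset.sum_congr rfl fun n _ => ?_
    rw [hfg (μ n)]
    exact (PiTensorProduct.tprod K).map_update_add μ n _ _
  rw [main]
  abel

end DTAux

namespace DTAux2

variable {L : Type*} {κ : ℕ}

/-- The concatenation of blocks. -/
def blockGet (hκ : 0 < κ) (m : ℕ) (l : Fin m → Fin κ → L) : Fin (κ * m) → L :=
  fun w => l ⟨(w : ℕ) / κ, Nat.div_lt_of_lt_mul w.2⟩ ⟨(w : ℕ) % κ, Nat.mod_lt _ hκ⟩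

/-- position of entry `n` of block `j` in the concatenation -/
def finPos (hκ : 0 < κ) {m : ℕ} (j : Fin m) (n : Fin κ) : Fin (κ * m) :=
  ⟨(j : ℕ) * κ + (n : ℕ), by
    have h1 : ((j : ℕ) + 1) * κ ≤ m * κ := Nat.mul_le_mul_right κ j.2
    have h2 : ((j : ℕ) + 1) * κ = (j : ℕ) * κ + κ := by ring
    have h3 : m * κ = κ * m := by ring
    have := n.2
    omega⟩

lemma finPos_div (hκ : 0 < κ) {m : ℕ} (j : Fin m) (n : Fin κ) :
    ((j : ℕ) * κ + (n : ℕ)) / κ = (j : ℕ) := by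
  rw [Nat.mul_comm, Nat.mul_add_div hκ, Nat.div_eq_of_lt n.2, Nat.add_zero]

lemma finPos_mod (hκ : 0 < κ) {m : ℕ} (j : Fin m) (n : Fin κ) :
    ((j : ℕ) * κ + (n : ℕ)) % κ = (n : ℕ) := by
  rw [Nat.mul_comm, Nat.mul_add_mod, Nat.mod_eq_of_lt n.2]

lemma fin_app_congr {m : ℕ} (l : Fin m → Fin κ → L) {j j' : Fin m} {n n' : Fin κ}
    (hj : j = j') (hn : n = n') : l j n = l j' n' := by rw [hj, hn]

lemma blockGet_eq (hκ : 0 < κ) {m : ℕ} (l : Fin m → Fin κ → L) (w : Fin (κ * m))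
    (j : Fin m) (n : Fin κ) (hj : (w : ℕ) / κ = (j : ℕ)) (hn : (w : ℕ) % κ = (n : ℕ)) :
    blockGet hκ m l w = l j n :=
  fin_app_congr l (Fin.ext hj) (Fin.ext hn)

lemma blockGet_finPos (hκ : 0 < κ) {m : ℕ} (l : Fin m → Fin κ → L) (j : Fin m) (n : Fin κ) :
    blockGet hκ m l (finPos hκ j n) = l j n :=
  blockGet_eq hκ l _ j n (finPos_div hκ j n) (finPos_mod hκ j n)

/-- equivalence between pairs and concatenated positions -/
def posEquiv (hκ : 0 < κ) (m : ℕ) : Fin m × Fin κ ≃ Fin (κ * m) where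
  toFun x := finPos hκ x.1 x.2
  invFun w := (⟨(w : ℕ) / κ, Nat.div_lt_of_lt_mul w.2⟩, ⟨(w : ℕ) % κ, Nat.mod_lt _ hκ⟩)
  left_inv x := by
    ext
    · exact finPos_div hκ x.1 x.2
    · exact finPos_mod hκ x.1 x.2
  right_inv w := by
    apply Fin.ext
    show (w : ℕ) / κ * κ + (w : ℕ) % κ = (w : ℕ)
    have h1 := Nat.div_add_mod (w : ℕ) κ
    have h2 : (w : ℕ) / κ * κ = κ * ((w : ℕ) / κ) := Nat.mul_comm _ _
    omega

lemma finPos_inj (hκ : 0 < κ) {m : ℕ} {j j' : Fin m} {n n' : Fin κ}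
    (h : finPos hκ j' n' = finPos hκ j n) : j' = j ∧ n' = n := by
  have := (posEquiv hκ m).injective (a₁ := (j', n')) (a₂ := (j, n)) h
  exact ⟨congrArg Prod.fst this, congrArg Prod.snd this⟩

lemma blockGet_update (hκ : 0 < κ) {m : ℕ} (l : Fin m → Fin κ → L) (j : Fin m) (n : Fin κ)
    (v : L) :
    blockGet hκ m (Function.update l j (Function.update (l j) n v)) =
      Function.update (blockGet hκ m l) (finPos hκ j n) v := by
  have key : ∀ (j' : Fin m) (n' : Fin κ),
      blockGet hκ m (Function.update l j (Function.update (l j) n v)) (finPos hκ j' n') =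
        Function.update (blockGet hκ m l) (finPos hκ j n) v (finPos hκ j' n') := by
    intro j' n'
    rw [blockGet_finPos, Function.update_apply, Function.update_apply]
    rcases eq_or_ne j' j with rfl | hj
    · rw [if_pos rfl, Function.update_apply]
      rcases eq_or_ne n' n with rfl | hn
      · rw [if_pos rfl, if_pos rfl]
      · rw [if_neg hn, if_neg (fun h => hn (finPos_inj hκ h).2), blockGet_finPos]
    · rw [if_neg hj, if_neg (fun h => hj (finPos_inj hκ h).1), blockGet_finPos]
  funext w
  obtain ⟨⟨j', n'⟩, hw⟩ := (posEquiv hκ m).surjective w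
  rw [← hw]
  exact key j' n'

end DTAux2

namespace Part3
open DTAux2 DTAux

variable {K L : Type*} [Field K] [AddCommGroup L] [Module K L] {κ : ℕ}


variable {N : Type*} [AddCommGroup N] [Module K N]

/-- junk element of an empty family -/
def emptyFam (κ : ℕ) (L : Type*) : Fin (κ * 0) → L := fun w => absurd w.2 (by omega)

/-- turning a `κ*a`-multilinear map on `L` into an `a`-multilinear map on the tensor power -/
noncomputable def tensorize (hκ : 0 < κ) :
    (a : ℕ) → (MultilinearMap K (fun _ : Fin (κ * a) => L) N →ₗ[K]
      MultilinearMap K (fun _ : Fin a => TP K L κ) N)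
  | 0 =>
    { toFun := fun F => MultilinearMap.constOfIsEmpty K _ (F (emptyFam κ L))
      map_add' := fun F G => rfl
      map_smul' := fun c F => rfl }
  | a + 1 =>
    ((multilinearCurryLeftEquiv K (fun _ : Fin (a + 1) => TP K L κ) N).symm.toLinearMap) ∘ₗ
      (LinearMap.llcomp K (TP K L κ) _ _ (tensorize hκ a)) ∘ₗ
      (PiTensorProduct.lift.toLinearMap) ∘ₗ
      ((MultilinearMap.currySumEquiv (R := K) (ι := Fin κ) (ι' := Fin (κ * a)) (N := fun _ => L) (M₂ := N)).toLinearMap) ∘ₗ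
      ((MultilinearMap.domDomCongrLinearEquiv (R := K) (S := K) (M₂ := L) (M₃ := N)
        ((finSumFinEquiv.trans (finCongr (by ring : κ + κ * a = κ * (a + 1)))).symm)).toLinearMap)

lemma tensorize_tprod (hκ : 0 < κ) (a : ℕ) (F : MultilinearMap K (fun _ : Fin (κ * a) => L) N)
    (l : Fin a → Fin κ → L) :
    tensorize hκ a F (fun j => PiTensorProduct.tprod K (l j)) = F (blockGet hκ a l) := by
  induction a with
  | zero =>
    have h0 : tensorize (L := L) (N := N) hκ 0 F (fun j => PiTensorProduct.tprod K (l j)) =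
        F (emptyFam κ L) := rfl
    rw [h0]
    congr 1
    funext w
    exact absurd w.2 (by omega)
  | succ a ih =>
    set σ : Fin (κ * (a + 1)) ≃ (Fin κ ⊕ Fin (κ * a)) :=
      (finSumFinEquiv.trans (finCongr (by ring : κ + κ * a = κ * (a + 1)))).symm with hσdef
    have step : tensorize hκ (a + 1) F (fun j => PiTensorProduct.tprod K (l j)) =
        tensorize hκ a (PiTensorProduct.lift ((F.domDomCongr σ).currySum)
          (PiTensorProduct.tprod K (l 0)))
          (fun j : Fin a => PiTensorProduct.tprod K (l j.succ)) := rfl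
    rw [step, PiTensorProduct.lift.tprod, ih]
    rw [MultilinearMap.currySum_apply, MultilinearMap.domDomCongr_apply]
    congr 1
    funext w
    by_cases hw : (w : ℕ) < κ
    · have hσ : σ w = Sum.inl ⟨(w : ℕ), hw⟩ := by
        rw [hσdef, Equiv.symm_apply_eq]
        apply Fin.ext
        simp
      rw [hσ]
      show l 0 ⟨(w : ℕ), hw⟩ = blockGet hκ (a + 1) l w
      rw [blockGet_eq hκ l w 0 ⟨(w : ℕ), hw⟩ (by simp [Nat.div_eq_of_lt hw])
        (Nat.mod_eq_of_lt hw)]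
    · have hmul : κ * (a + 1) = κ * a + κ := by ring
      have pf : (w : ℕ) - κ < κ * a := by have := w.2; omega
      have hσ : σ w = Sum.inr ⟨(w : ℕ) - κ, pf⟩ := by
        rw [hσdef, Equiv.symm_apply_eq]
        apply Fin.ext
        simp
        omega
      rw [hσ]
      show blockGet hκ a (fun j => l j.succ) ⟨(w : ℕ) - κ, pf⟩ = blockGet hκ (a + 1) l w
      have pfj : ((w : ℕ) - κ) / κ < a := Nat.div_lt_of_lt_mul pf
      have pfn : ((w : ℕ) - κ) % κ < κ := Nat.mod_lt _ hκ
      have hdiv : (w : ℕ) / κ = ((w : ℕ) - κ) / κ + 1 := by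
        conv_lhs => rw [show (w : ℕ) = ((w : ℕ) - κ) + κ by omega]
        rw [Nat.add_div_right _ hκ]
      have hmod : (w : ℕ) % κ = ((w : ℕ) - κ) % κ := by
        conv_lhs => rw [show (w : ℕ) = ((w : ℕ) - κ) + κ by omega]
        rw [Nat.add_mod_right]
      rw [blockGet_eq hκ (fun j => l j.succ) ⟨(w : ℕ) - κ, pf⟩ ⟨((w : ℕ) - κ) / κ, pfj⟩
        ⟨((w : ℕ) - κ) % κ, pfn⟩ rfl rfl,
        blockGet_eq hκ l w (Fin.succ ⟨((w : ℕ) - κ) / κ, pfj⟩) ⟨((w : ℕ) - κ) % κ, pfn⟩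
        (by simpa using hdiv) hmod]

end Part3

namespace DTAux3

variable {K : Type*} [Field K]

/-- Induction principle for tuples: a predicate stable under pointwise linear operations that
holds on tuples of generators holds everywhere. -/
lemma tuple_induction {M : Type*} [AddCommGroup M] [Module K M] (S : Set M)
    (hS : Submodule.span K S = ⊤) {m : ℕ} (P : (Fin m → M) → Prop)
    (hgen : ∀ v, (∀ i, v i ∈ S) → P v)
    (h0 : ∀ v (i : Fin m), P (Function.update v i 0))
    (hadd : ∀ v (i : Fin m) x y, P (Function.update v i x) → P (Function.update v i y) →
      P (Function.update v i (x + y)))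
    (hsmul : ∀ v (i : Fin m) (c : K) x, P (Function.update v i x) →
      P (Function.update v i (c • x))) :
    ∀ v, P v := by
  have key : ∀ k, ∀ v : Fin m → M, (∀ i : Fin m, k ≤ (i : ℕ) → v i ∈ S) → P v := by
    intro k
    induction k with
    | zero => exact fun v hv => hgen v fun i => hv i (Nat.zero_le _)
    | succ k ih =>
      intro v hv
      by_cases hk : k < m
      · have hmem : v ⟨k, hk⟩ ∈ Submodule.span K S := by rw [hS]; trivial
        have main : P (Function.update v ⟨k, hk⟩ (v ⟨k, hk⟩)) := by
          refine Submodule.span_induction (p := fun x _ => P (Function.update v ⟨k, hk⟩ x))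
            ?_ ?_ ?_ ?_ hmem
          · intro x hx
            refine ih _ fun i hi => ?_
            rcases eq_or_ne i ⟨k, hk⟩ with rfl | hne
            · rwa [Function.update_self]
            · rw [Function.update_of_ne hne]
              refine hv i ?_
              have : (i : ℕ) ≠ k := fun h => hne (Fin.ext h)
              omega
          · exact h0 v _
          · exact fun x y _ _ => hadd v _ x y
          · exact fun c x _ => hsmul v _ c x
        rwa [Function.update_eq_self] at main
      · exact ih v fun i hi => absurd i.2 (by omega)
  exact fun v => key m v fun i hi => absurd i.2 (by omega)

end DTAux3

namespace DT4
open DTAux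

variable {K L : Type*} [Field K] [AddCommGroup L] [Module K L] {κ : ℕ}


/-- flip a multilinear map with values in endomorphisms -/
noncomputable def flipMk {m : ℕ}
    (C : MultilinearMap K (fun _ : Fin m => TP K L κ) (TP K L κ →ₗ[K] TP K L κ)) :
    TP K L κ →ₗ[K] MultilinearMap K (fun _ : Fin m => TP K L κ) (TP K L κ) where
  toFun t := (LinearMap.applyₗ t).compMultilinearMap C
  map_add' t t' := by ext v; simp
  map_smul' c t := by ext v; simp

@[simp] lemma flipMk_apply {m : ℕ}
    (C : MultilinearMap K (fun _ : Fin m => TP K L κ) (TP K L κ →ₗ[K] TP K L κ))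
    (t : TP K L κ) (v : Fin m → TP K L κ) : flipMk C t v = C v t := rfl

end DT4
section Theorem7

open DTAux DTAux2 Part3 DTAux3 DT4 Function TensorProduct

theorem daletskii_takhtajan_general {K L : Type*} [Field K] [AddCommGroup L] [Module K L]
    (p κ : ℕ) [NeZero p] (hp : 2 ≤ p) (hκ : 1 ≤ κ)
    (b : MultilinearMap K (fun _ : Fin (κ * (p - 1) + 1) => L) L) (hb : FundId ⇑b) :
    ∃ B : MultilinearMap K (fun _ : Fin p => PiTensorProduct K (fun _ : Fin κ => L))
        (PiTensorProduct K (fun _ : Fin κ => L)),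
      (∀ ls : Fin p → Fin κ → L,
        B (fun j => PiTensorProduct.tprod K (ls j)) =
          ∑ i : Fin κ,
            PiTensorProduct.tprod K (Function.update (ls 0) i
              (b fun j : Fin (κ * (p - 1) + 1) =>
                if (j : ℕ) = 0 then ls 0 i
                else
                  ls ⟨((j : ℕ) - 1) / κ + 1, by
                        have h2 : ((j : ℕ) - 1) / κ < p - 1 :=
                          Nat.div_lt_of_lt_mul (by
                            have := j.isLt
                            have h3 : κ * (p - 1) + 1 = (p - 1) * κ + 1 := by ring
                            have h4 : 1 * 1 ≤ (p - 1) * κ :=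
                              Nat.mul_le_mul (by omega) (by omega)
                            omega)
                        omega⟩
                     ⟨((j : ℕ) - 1) % κ, Nat.mod_lt _ (by omega)⟩))) ∧
      FundId ⇑B := by
  classical
  obtain ⟨m, rfl⟩ : ∃ m, p = m + 1 := ⟨p - 1, by omega⟩
  have hκ0 : 0 < κ := hκ
  let b' : MultilinearMap K (fun _ : Fin (κ * m + 1) => L) L := b
  have hb' : ∀ x y : Fin (κ * m + 1) → L,
      b' (Function.update y 0 (b' x)) =
        ∑ i, b' (Function.update x i (b' (Function.update y 0 (x i)))) := hb
  obtain ⟨C, Cev⟩ : ∃ C : MultilinearMap K (fun _ : Fin m => TP K L κ)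
      (TP K L κ →ₗ[K] TP K L κ),
      ∀ σ : Fin m → Fin κ → L,
        C (fun i => PiTensorProduct.tprod K (σ i)) = delta (Rfun b' (blockGet hκ0 m σ)) :=
    ⟨tensorize hκ0 m (Emap b'), fun σ => by rw [tensorize_tprod]; rfl⟩
  obtain ⟨B, Bev⟩ : ∃ B : MultilinearMap K (fun _ : Fin (m + 1) => TP K L κ) (TP K L κ),
      ∀ v : Fin (m + 1) → TP K L κ, B v = C (Fin.tail v) (v 0) :=
    ⟨LinearMap.uncurryLeft (flipMk C), fun v => rfl⟩
  have hz : ∀ (w : Fin m → TP K L κ) (i : Fin m), C (Function.update w i 0) = 0 :=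
    fun w i => C.map_coord_zero i (Function.update_self i 0 w)
  have spanT : Submodule.span K
      (Set.range (PiTensorProduct.tprod K (s := fun _ : Fin κ => L))) = ⊤ :=
    PiTensorProduct.span_tprod_eq_top (R := K) (s := fun _ : Fin κ => L)
  -- the key commutation identity
  have star : ∀ r s : Fin m → TP K L κ, ∀ u : TP K L κ,
      C r (C s u) = C s (C r u) +
        ∑ j : Fin m, C (Function.update s j (C r (s j))) u := by
    refine tuple_induction _ spanT
      (fun r => ∀ s u, C r (C s u) = C s (C r u) +
        ∑ j : Fin m, C (Function.update s j (C r (s j))) u) ?_ ?_ ?_ ?_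
    · -- r made of pure tensors
      intro r hr
      choose ρ hρ using hr
      have hrr : r = fun i => PiTensorProduct.tprod K (ρ i) := funext fun i => (hρ i).symm
      subst hrr
      refine tuple_induction _ spanT
        (fun s => ∀ u, C (fun i => PiTensorProduct.tprod K (ρ i)) (C s u) =
          C s (C (fun i => PiTensorProduct.tprod K (ρ i)) u) +
          ∑ j : Fin m, C (Function.update s j
            (C (fun i => PiTensorProduct.tprod K (ρ i)) (s j))) u) ?_ ?_ ?_ ?_
      · -- s made of pure tensors
        intro s hs
        choose σ hσ using hs
        have hss : s = fun i => PiTensorProduct.tprod K (σ i) := funext fun i => (hσ i).symm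
        subst hss
        intro u
        have hu : u ∈ Submodule.span K
            (Set.range (PiTensorProduct.tprod K (s := fun _ : Fin κ => L))) := by
          rw [spanT]; trivial
        refine Submodule.span_induction
          (p := fun u _ => C (fun i => PiTensorProduct.tprod K (ρ i))
              (C (fun i => PiTensorProduct.tprod K (σ i)) u) =
            C (fun i => PiTensorProduct.tprod K (σ i))
              (C (fun i => PiTensorProduct.tprod K (ρ i)) u) +
            ∑ j : Fin m, C (Function.update (fun i => PiTensorProduct.tprod K (σ i)) j
              (C (fun i => PiTensorProduct.tprod K (ρ i))
                ((fun i => PiTensorProduct.tprod K (σ i)) j))) u) ?_ ?_ ?_ ?_ hu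
        · -- pure u : the core computation
          rintro _ ⟨μ, rfl⟩
          dsimp only
          have third : ∀ j : Fin m,
              C (Function.update (fun i => PiTensorProduct.tprod K (σ i)) j
                  (C (fun i => PiTensorProduct.tprod K (ρ i)) (PiTensorProduct.tprod K (σ j))))
                (PiTensorProduct.tprod K μ) =
              ∑ n : Fin κ, delta (Rfun b' (Function.update (blockGet hκ0 m σ)
                  (finPos hκ0 j n) (Rfun b' (blockGet hκ0 m ρ) (σ j n))))
                (PiTensorProduct.tprod K μ) := by
            intro j
            rw [Cev ρ, delta_tprod, MultilinearMap.map_update_sum, LinearMap.sum_apply]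
            refine Finset.sum_congr rfl fun n _ => ?_
            have e1 : Function.update (fun i => PiTensorProduct.tprod K (σ i)) j
                (PiTensorProduct.tprod K (Function.update (σ j) n
                  (Rfun b' (blockGet hκ0 m ρ) (σ j n)))) =
                fun i => PiTensorProduct.tprod K
                  (Function.update σ j (Function.update (σ j) n
                    (Rfun b' (blockGet hκ0 m ρ) (σ j n))) i) := by
              funext i
              rcases eq_or_ne i j with rfl | h
              · rw [Function.update_self, Function.update_self]
              · rw [Function.update_of_ne h, Function.update_of_ne h]
            rw [e1, Cev, blockGet_update]
          have hfg : ∀ z : L, Rfun b' (blockGet hκ0 m ρ) (Rfun b' (blockGet hκ0 m σ) z) =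
              Rfun b' (blockGet hκ0 m σ) (Rfun b' (blockGet hκ0 m ρ) z) +
              (∑ w : Fin (κ * m), Rfun b' (Function.update (blockGet hκ0 m σ) w
                (Rfun b' (blockGet hκ0 m ρ) (blockGet hκ0 m σ w)))) z := by
            intro z
            rw [LinearMap.sum_apply]
            exact fund_flip b' hb' (blockGet hκ0 m σ) (blockGet hκ0 m ρ) z
          have lie := delta_delta (Rfun b' (blockGet hκ0 m σ)) (Rfun b' (blockGet hκ0 m ρ))
            (∑ w : Fin (κ * m), Rfun b' (Function.update (blockGet hκ0 m σ) w
              (Rfun b' (blockGet hκ0 m ρ) (blockGet hκ0 m σ w)))) hfg μ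
          rw [Finset.sum_congr rfl (fun j _ => third j), Cev σ, Cev ρ, lie]
          congr 1
          rw [delta_sum, LinearMap.sum_apply,
            ← Equiv.sum_comp (posEquiv hκ0 m) (fun w => delta (Rfun b'
              (Function.update (blockGet hκ0 m σ) w
                (Rfun b' (blockGet hκ0 m ρ) (blockGet hκ0 m σ w))))
              (PiTensorProduct.tprod K μ)), Fintype.sum_prod_type]
          refine Finset.sum_congr rfl fun j _ => Finset.sum_congr rfl fun n _ => ?_
          show delta (Rfun b' (Function.update (blockGet hκ0 m σ) (finPos hκ0 j n)
              (Rfun b' (blockGet hκ0 m ρ) (blockGet hκ0 m σ (finPos hκ0 j n)))))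
              (PiTensorProduct.tprod K μ) = _
          rw [blockGet_finPos]
        · simp
        · intro v w _ _ hv hw
          simp only [map_add]
          rw [hv, hw, Finset.sum_add_distrib]
          abel
        · intro c v _ hv
          simp only [map_smul]
          rw [hv, smul_add, Finset.smul_sum]
      · -- zero slot in s
        intro v i u
        rw [hz v i]
        simp only [LinearMap.zero_apply, map_zero]
        rw [Finset.sum_eq_zero, add_zero]
        intro j _
        rcases eq_or_ne j i with rfl | hne
        · rw [Function.update_self, map_zero, Function.update_idem, hz v j,
            LinearMap.zero_apply]
        · have h0' : (Function.update (Function.update v i 0) j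
              (C (fun i => PiTensorProduct.tprod K (ρ i))
                (Function.update v i 0 j))) i = 0 := by
            rw [Function.update_of_ne (Ne.symm hne), Function.update_self]
          rw [C.map_coord_zero i h0', LinearMap.zero_apply]
      · -- additive slot in s
        intro v i x y hx hy u
        have e : C (Function.update v i (x + y)) =
            C (Function.update v i x) + C (Function.update v i y) := C.map_update_add v i x y
        have hsplit : ∀ j : Fin m,
            C (Function.update (Function.update v i (x + y)) j
              (C (fun i => PiTensorProduct.tprod K (ρ i))
                (Function.update v i (x + y) j))) u =
            C (Function.update (Function.update v i x) j
              (C (fun i => PiTensorProduct.tprod K (ρ i))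
                (Function.update v i x j))) u +
            C (Function.update (Function.update v i y) j
              (C (fun i => PiTensorProduct.tprod K (ρ i))
                (Function.update v i y j))) u := by
          intro j
          rcases eq_or_ne j i with rfl | hne
          · simp only [Function.update_idem, Function.update_self, map_add]
            rw [C.map_update_add, LinearMap.add_apply]
          · have e1 : ∀ z : TP K L κ, Function.update v i z j = v j :=
              fun z => Function.update_of_ne hne _ _
            simp only [e1]
            simp only [Function.update_comm hne.symm]
            rw [C.map_update_add, LinearMap.add_apply]
        rw [e]
        simp only [LinearMap.add_apply, map_add]
        rw [Finset.sum_congr rfl (fun j _ => hsplit j), Finset.sum_add_distrib, hx u, hy u]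
        abel
      · -- smul slot in s
        intro v i c x hx u
        have e : C (Function.update v i (c • x)) = c • C (Function.update v i x) :=
          C.map_update_smul v i c x
        have hsplit : ∀ j : Fin m,
            C (Function.update (Function.update v i (c • x)) j
              (C (fun i => PiTensorProduct.tprod K (ρ i))
                (Function.update v i (c • x) j))) u =
            c • C (Function.update (Function.update v i x) j
              (C (fun i => PiTensorProduct.tprod K (ρ i))
                (Function.update v i x j))) u := by
          intro j
          rcases eq_or_ne j i with rfl | hne
          · simp only [Function.update_idem, Function.update_self, map_smul]
            rw [C.map_update_smul, LinearMap.smul_apply]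
          · have e1 : ∀ z : TP K L κ, Function.update v i z j = v j :=
              fun z => Function.update_of_ne hne _ _
            simp only [e1]
            simp only [Function.update_comm hne.symm]
            rw [C.map_update_smul, LinearMap.smul_apply]
        rw [e]
        simp only [LinearMap.smul_apply, map_smul]
        rw [Finset.sum_congr rfl (fun j _ => hsplit j), ← Finset.smul_sum, hx u, smul_add]
    · -- zero slot in r
      intro v i s u
      rw [hz v i]
      simp [hz]
    · -- additive slot in r
      intro v i x y hx hy s u
      have e : C (Function.update v i (x + y)) =
          C (Function.update v i x) + C (Function.update v i y) := C.map_update_add v i x y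
      rw [e]
      simp only [LinearMap.add_apply, map_add, MultilinearMap.map_update_add,
        Finset.sum_add_distrib]
      rw [hx s u, hy s u]
      abel
    · -- smul slot in r
      intro v i c x hx s u
      have e : C (Function.update v i (c • x)) = c • C (Function.update v i x) :=
        C.map_update_smul v i c x
      rw [e]
      simp only [LinearMap.smul_apply, map_smul, MultilinearMap.map_update_smul,
        Finset.smul_sum]
      rw [hx s u, smul_add, Finset.smul_sum]
  refine ⟨B, ?_, ?_⟩
  · -- the formula on pure tensors
    intro ls
    rw [Bev]
    rw [show Fin.tail (fun j : Fin (m + 1) => PiTensorProduct.tprod K (ls j)) =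
        (fun i : Fin m => PiTensorProduct.tprod K (ls i.succ)) from rfl]
    rw [Cev (fun i => ls i.succ)]
    rw [delta_tprod]
    refine Finset.sum_congr rfl fun i _ => ?_
    refine congrArg _ (congrArg _ ?_)
    show b' (Fin.cons (ls 0 i) (blockGet hκ0 m (fun i' => ls i'.succ))) = _
    refine congrArg _ (funext fun j => ?_)
    obtain ⟨jv, hj⟩ := j
    cases jv with
    | zero =>
      rw [if_pos rfl]
      rfl
    | succ t =>
      rw [if_neg (Nat.succ_ne_zero t)]
      have ht : t < κ * m := by
        have : t + 1 < κ * m + 1 := hj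
        omega
      have hmk : (⟨t + 1, hj⟩ : Fin (κ * m + 1)) = Fin.succ ⟨t, ht⟩ := rfl
      rw [hmk, Fin.cons_succ,
        blockGet_eq hκ0 (fun i' => ls i'.succ) ⟨t, ht⟩
          ⟨t / κ, Nat.div_lt_of_lt_mul ht⟩ ⟨t % κ, Nat.mod_lt _ hκ0⟩ rfl rfl]
      exact fin_app_congr ls (Fin.ext (by simp)) (Fin.ext (by simp))
  · -- the fundamental identity
    intro x y
    have h1 : B (Function.update y 0 (B x)) = C (Fin.tail y) (C (Fin.tail x) (x 0)) := by
      rw [Bev, Bev, Fin.tail_update_zero, Function.update_self]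
    have h2 : B (Function.update x 0 (B (Function.update y 0 (x 0)))) =
        C (Fin.tail x) (C (Fin.tail y) (x 0)) := by
      rw [Bev, Bev, Fin.tail_update_zero, Function.update_self, Fin.tail_update_zero,
        Function.update_self]
    have h3 : ∀ j : Fin m, B (Function.update x j.succ (B (Function.update y 0 (x j.succ)))) =
        C (Function.update (Fin.tail x) j (C (Fin.tail y) (Fin.tail x j))) (x 0) := by
      intro j
      rw [Bev, Bev, Fin.tail_update_succ, Fin.tail_update_zero, Function.update_self,
        Function.update_of_ne (Fin.succ_ne_zero j).symm]
      rfl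
    rw [h1, Fin.sum_univ_succ, h2, Finset.sum_congr rfl (fun j _ => h3 j)]
    exact star (Fin.tail y) (Fin.tail x) (x 0)

end Theorem7
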